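/- (Corollary 7, achievability for γ = −1) Let β > 0, let C₁, C̃₂, C₅ ≥ 0, a, d > 0, and set α = (β + 1)/(2β + 1), η = 1/(2β + 1), a_i = a·i^{−α}, δ_i = d·i^{−η}. Define H̃(n) = C₁/(n a_n) + (C̃₂/n)·Σ_{i=1}^n a_i δ_i^{−1} + (C₅/n)·Σ_{i=1}^n δ_i^{β}. Then there exists a constant C > 0 such that H̃(n) ≤ C·n^{−β/(2β+1)} for all n ≥ 1. In particular the bound decays at rate n^{−1/3} for β = 1 (one-sided differences) and n^{−2/5} for β = 2 (symmetric differences). -/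

import Mathlib

/-- Corollary 7 (achievability for `γ = −1`, common random numbers): with
`α = (β+1)/(2β+1)`, `η = 1/(2β+1)`, `a_i = a i^{−α}`, `δ_i = d i^{−η}`, the
mirror descent error bound `H̃(n)` decays at rate `n^{−β/(2β+1)}`. -/
lemma md_sum_rpow_le (s : ℝ) (hs0 : 0 < s) (hs1 : s ≤ 1) (n : ℕ) :
    ∑ i ∈ Finset.Icc 1 n, (i : ℝ) ^ (s - 1) ≤ (n : ℝ) ^ s / s := by
  induction n with
  | zero => simp [Real.zero_rpow hs0.ne', le_div_iff₀ hs0]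
  | succ n ih =>
    rw [Finset.sum_Icc_succ_top (Nat.one_le_iff_ne_zero.mpr (Nat.succ_ne_zero n))]
    have hm : (0:ℝ) < ((n+1 : ℕ) : ℝ) := by exact_mod_cast Nat.succ_pos n
    set m : ℝ := ((n+1 : ℕ) : ℝ) with hmdef
    have hm1 : (1:ℝ) ≤ m := by rw [hmdef]; exact_mod_cast Nat.succ_le_succ (Nat.zero_le n)
    have key : s * m ^ (s - 1) ≤ m ^ s - (n : ℝ) ^ s := by
      have hb : (1 + (-1/m)) ^ s ≤ 1 + s * (-1/m) :=
        rpow_one_add_le_one_add_mul_self (by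
          rw [neg_div]; exact neg_le_neg (div_le_one_of_le₀ hm1 hm.le)) hs0.le hs1
      have hn : (n : ℝ) = m * (1 + (-1/m)) := by
        field_simp [hmdef]
        rw [hmdef]; push_cast; ring
      have h1 : (n : ℝ) ^ s = m ^ s * (1 + (-1/m)) ^ s := by
        rw [hn, Real.mul_rpow hm.le]
        have : (0:ℝ) ≤ 1 + (-1/m) := by
          rw [neg_div]
          have := div_le_one_of_le₀ hm1 hm.le
          linarith
        exact this
      have h2 : (n : ℝ) ^ s ≤ m ^ s * (1 + s * (-1/m)) := by
        rw [h1]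
        exact mul_le_mul_of_nonneg_left hb (Real.rpow_nonneg hm.le s)
      have h3 : m ^ s * (1 + s * (-1/m)) = m ^ s - s * m ^ (s-1) := by
        have : m ^ (s - 1) = m ^ s / m := by
          rw [Real.rpow_sub hm, Real.rpow_one]
        rw [this]; field_simp; try ring
      linarith
    have goal : (n : ℝ) ^ s / s + m ^ (s - 1) ≤ m ^ s / s := by
      rw [div_add' _ _ _ hs0.ne', div_le_div_iff₀ hs0 hs0]
      nlinarith [key]
    linarith

theorem md_corollary7_achievability
    (β C₁ C₂t C₅ a d : ℝ) (hβ : 0 < β)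
    (hC₁ : 0 ≤ C₁) (hC₂t : 0 ≤ C₂t) (hC₅ : 0 ≤ C₅)
    (ha : 0 < a) (hd : 0 < d)
    (α η : ℝ) (hα : α = (β + 1) / (2 * β + 1)) (hη : η = 1 / (2 * β + 1))
    (as δs : ℕ → ℝ)
    (has : ∀ i : ℕ, as i = a * (i : ℝ) ^ (-α))
    (hδs : ∀ i : ℕ, δs i = d * (i : ℝ) ^ (-η))
    (Ht : ℕ → ℝ)
    (hHt : ∀ n : ℕ, Ht n =
      C₁ / (n * as n)
      + C₂t / n * ∑ i ∈ Finset.Icc 1 n, as i * δs i ^ (-1 : ℝ)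
      + C₅ / n * ∑ i ∈ Finset.Icc 1 n, δs i ^ β) :
    ∃ C : ℝ, 0 < C ∧ ∀ n : ℕ, 1 ≤ n →
      Ht n ≤ C * (n : ℝ) ^ (-(β / (2 * β + 1))) := by
  have hden : (0:ℝ) < 2 * β + 1 := by linarith
  set q : ℝ := β / (2 * β + 1) with hqdef
  have hq0 : 0 < q := div_pos hβ hden
  have hq1 : q < 1 := (div_lt_one hden).mpr (by linarith)
  set s : ℝ := 1 - q with hsdef
  have hs0 : 0 < s := by simp only [hsdef]; linarith
  have hs1 : s ≤ 1 := by simp only [hsdef]; linarith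
  -- exponent identities
  have hαq : α - 1 = -q := by
    rw [hα, hqdef]; field_simp; try ring
  have hηα : η - α = s - 1 := by
    rw [hη, hα, hsdef, hqdef]; field_simp; try ring
  have hηβ : -η * β = s - 1 := by
    rw [hη, hsdef, hqdef]; field_simp; try ring
  refine ⟨C₁/a + C₂t * (a/d) / s + C₅ * d ^ β / s + 1, by positivity, ?_⟩
  intro n hn
  have hnp : (0:ℝ) < (n:ℝ) := by exact_mod_cast Nat.lt_of_lt_of_le Nat.zero_lt_one hn
  have hnq : (0:ℝ) < (n:ℝ) ^ (-q) := Real.rpow_pos_of_pos hnp _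
  have hS := md_sum_rpow_le s hs0 hs1 n
  have hSnn : 0 ≤ ∑ i ∈ Finset.Icc 1 n, (i : ℝ) ^ (s - 1) :=
    Finset.sum_nonneg fun i _ => Real.rpow_nonneg (Nat.cast_nonneg i) _
  have hnα : (0:ℝ) < (n:ℝ) ^ α := Real.rpow_pos_of_pos hnp α
  have h1 : C₁ / (n * as n) = C₁ / a * (n:ℝ) ^ (-q) := by
    rw [has n, ← hαq, Real.rpow_sub hnp, Real.rpow_one, Real.rpow_neg hnp.le]
    field_simp
  -- Term 2 summands
  have h2 : ∑ i ∈ Finset.Icc 1 n, as i * δs i ^ (-1:ℝ)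
      = (a / d) * ∑ i ∈ Finset.Icc 1 n, (i : ℝ) ^ (s - 1) := by
    rw [Finset.mul_sum]
    refine Finset.sum_congr rfl fun i hi => ?_
    have hi1 : 1 ≤ i := (Finset.mem_Icc.mp hi).1
    have hip : (0:ℝ) < (i:ℝ) := by exact_mod_cast hi1
    have hxinv : (((i:ℝ) ^ (-η))⁻¹ : ℝ) = (i:ℝ) ^ η := by
      rw [← Real.rpow_neg hip.le, neg_neg]
    rw [has i, hδs i, Real.rpow_neg_one, mul_inv, hxinv,
      ← hηα, show η - α = η + (-α) from by ring, Real.rpow_add hip]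
    field_simp
  -- Term 3 summands
  have h3 : ∑ i ∈ Finset.Icc 1 n, δs i ^ β
      = d ^ β * ∑ i ∈ Finset.Icc 1 n, (i : ℝ) ^ (s - 1) := by
    rw [Finset.mul_sum]
    refine Finset.sum_congr rfl fun i hi => ?_
    have hi1 : 1 ≤ i := (Finset.mem_Icc.mp hi).1
    have hip : (0:ℝ) < (i:ℝ) := by exact_mod_cast hi1
    rw [hδs i, Real.mul_rpow hd.le (Real.rpow_nonneg hip.le _),
      ← Real.rpow_mul hip.le, hηβ]
  have hns : (n:ℝ) ^ s = (n:ℝ) ^ (-q) * n := by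
    rw [show s = -q + 1 from by rw [hsdef]; ring, Real.rpow_add hnp, Real.rpow_one]
  -- assemble
  rw [hHt n, h1, h2, h3]
  have hb2 : C₂t / n * ((a/d) * ∑ i ∈ Finset.Icc 1 n, (i : ℝ) ^ (s - 1))
      ≤ C₂t * (a/d) / s * (n:ℝ) ^ (-q) := by
    have step : C₂t / n * ((a/d) * ∑ i ∈ Finset.Icc 1 n, (i : ℝ) ^ (s - 1))
        ≤ C₂t / n * ((a/d) * ((n:ℝ) ^ s / s)) := by
      apply mul_le_mul_of_nonneg_left _ (by positivity)
      exact mul_le_mul_of_nonneg_left hS (by positivity)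
    refine step.trans (le_of_eq ?_)
    rw [hns]
    field_simp
  have hb3 : C₅ / n * (d ^ β * ∑ i ∈ Finset.Icc 1 n, (i : ℝ) ^ (s - 1))
      ≤ C₅ * d ^ β / s * (n:ℝ) ^ (-q) := by
    have hdb : (0:ℝ) ≤ d ^ β := Real.rpow_nonneg hd.le β
    have step : C₅ / n * (d ^ β * ∑ i ∈ Finset.Icc 1 n, (i : ℝ) ^ (s - 1))
        ≤ C₅ / n * (d ^ β * ((n:ℝ) ^ s / s)) := by
      apply mul_le_mul_of_nonneg_left _ (by positivity)
      exact mul_le_mul_of_nonneg_left hS hdb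
    refine step.trans (le_of_eq ?_)
    rw [hns]
    field_simp
  have hlast : C₁ / a * (n:ℝ) ^ (-q) + C₂t * (a/d) / s * (n:ℝ) ^ (-q)
      + C₅ * d ^ β / s * (n:ℝ) ^ (-q)
      ≤ (C₁/a + C₂t * (a/d) / s + C₅ * d ^ β / s + 1) * (n:ℝ) ^ (-q) := by
    nlinarith [hnq]
  linarith
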